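/- (Toy example: the surrogate-loss second-order estimator is wrong.) Let θ ∈ (0,1), let p(1;θ) = θ and p(0;θ) = 1−θ, and let f(x,θ) = x(1−θ) + (1−x)(1+θ) for x ∈ {0,1}. Define g(x;θ) = f(x,θ) ∂_θ log p(x;θ) + ∂_θ f(x,θ). Then the expectation of the surrogate-loss second-order estimator equals −2 for every θ ∈ (0,1): ∑_{x∈{0,1}} p(x;θ) · ( g(x;θ) ∂_θ log p(x;θ) + f(x,θ) ∂²_θ log p(x;θ) + ∂²_θ f(x,θ) ) = −2, whereas the true second derivative of the objective is −4. -/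

import Mathlib

private lemma fderiv_lin (a b : ℝ) :
    deriv (fun t : ℝ => a * (1 - t) + b * (1 + t)) = fun _ => -a + b := by
  funext t
  have h : HasDerivAt (fun t : ℝ => a * (1 - t) + b * (1 + t)) (-a + b) t := by
    have h1 : HasDerivAt (fun t : ℝ => a * (1 - t)) (a * (-1)) t := by
      simpa using (((hasDerivAt_const t (1:ℝ)).sub (hasDerivAt_id t)).const_mul a)
    have h2 : HasDerivAt (fun t : ℝ => b * (1 + t)) (b * 1) t := by
      simpa using (((hasDerivAt_const t (1:ℝ)).add (hasDerivAt_id t)).const_mul b)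
    have h3 : HasDerivAt (fun t : ℝ => a * (1 - t) + b * (1 + t)) (a * (-1) + b * 1) t := h1.add h2
    simpa using h3
  exact h.deriv

private lemma dlog0 {θ : ℝ} (h : θ ≠ 1) :
    deriv (fun s : ℝ => Real.log (1 - s)) θ = -(1 - θ)⁻¹ := by
  have hne : (1 : ℝ) - θ ≠ 0 := sub_ne_zero.mpr (Ne.symm h)
  have hd : HasDerivAt (fun s : ℝ => Real.log (1 - s)) ((1 - θ)⁻¹ * (0 - 1)) θ :=
    (Real.hasDerivAt_log hne).comp θ ((hasDerivAt_const θ (1:ℝ)).sub (hasDerivAt_id θ))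
  rw [hd.deriv]; ring

private lemma ddlog0 {θ : ℝ} (h : θ ≠ 1) :
    deriv (deriv (fun s : ℝ => Real.log (1 - s))) θ = -((1 - θ)^2)⁻¹ := by
  have hev : deriv (fun s : ℝ => Real.log (1 - s)) =ᶠ[nhds θ] fun s => -(1 - s)⁻¹ := by
    have hopen : IsOpen {s : ℝ | s ≠ 1} := isOpen_ne
    filter_upwards [hopen.mem_nhds h] with s hs
    exact dlog0 hs
  rw [hev.deriv_eq]
  have hne : (1 : ℝ) - θ ≠ 0 := sub_ne_zero.mpr (Ne.symm h)
  have hd := (((hasDerivAt_const θ (1:ℝ)).sub (hasDerivAt_id θ)).inv hne).neg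
  have hd : HasDerivAt (fun s : ℝ => -(1 - s)⁻¹) (-(-(0 - 1) / (1 - θ) ^ 2)) θ := hd
  rw [hd.deriv]
  field_simp
  norm_num

theorem toy_example_sl_second_order_wrong
    (p f g : ℝ → ℝ → ℝ)
    (hp1 : ∀ t : ℝ, p 1 t = t)
    (hp0 : ∀ t : ℝ, p 0 t = 1 - t)
    (hf : ∀ x t : ℝ, f x t = x * (1 - t) + (1 - x) * (1 + t))
    (hg : ∀ x t : ℝ, g x t =
      f x t * deriv (fun s => Real.log (p x s)) t + deriv (f x) t) :
    ∀ θ ∈ Set.Ioo (0 : ℝ) 1,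
      ∑ x ∈ ({0, 1} : Finset ℝ),
          p x θ * (g x θ * deriv (fun t => Real.log (p x t)) θ +
            f x θ * deriv (deriv (fun t => Real.log (p x t))) θ +
            deriv (deriv (f x)) θ) = -2 := by
  intro θ hθ
  obtain ⟨h0, h1⟩ := hθ
  have hθ0 : θ ≠ 0 := ne_of_gt h0
  have hθ1 : θ ≠ 1 := ne_of_lt h1
  have hlogp1 : (fun s : ℝ => Real.log (p 1 s)) = Real.log := by
    funext s; rw [hp1]
  have hlogp0 : (fun s : ℝ => Real.log (p 0 s)) = fun s => Real.log (1 - s) := by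
    funext s; rw [hp0]
  have hf1 : f 1 = fun t : ℝ => (1:ℝ) * (1 - t) + (1 - 1) * (1 + t) := by
    funext t; rw [hf]
  have hf0 : f 0 = fun t : ℝ => (0:ℝ) * (1 - t) + (1 - 0) * (1 + t) := by
    funext t; rw [hf]
  have hd1 : deriv (fun s : ℝ => Real.log (p 1 s)) θ = θ⁻¹ := by
    rw [hlogp1, Real.deriv_log]
  have hdd1 : deriv (deriv (fun s : ℝ => Real.log (p 1 s))) θ = -(θ^2)⁻¹ := by
    rw [hlogp1, Real.deriv_log']
    simp [deriv_inv]
  have hd0 : deriv (fun s : ℝ => Real.log (p 0 s)) θ = -(1 - θ)⁻¹ := by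
    rw [hlogp0]; exact dlog0 hθ1
  have hdd0 : deriv (deriv (fun s : ℝ => Real.log (p 0 s))) θ = -((1 - θ)^2)⁻¹ := by
    rw [hlogp0]; exact ddlog0 hθ1
  have hdf1 : deriv (f 1) θ = -1 := by
    rw [hf1, fderiv_lin]; norm_num
  have hdf0 : deriv (f 0) θ = 1 := by
    rw [hf0, fderiv_lin]; norm_num
  have hddf1 : deriv (deriv (f 1)) θ = 0 := by
    rw [hf1, fderiv_lin]; simp
  have hddf0 : deriv (deriv (f 0)) θ = 0 := by
    rw [hf0, fderiv_lin]; simp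
  rw [Finset.sum_pair (by norm_num : (0:ℝ) ≠ 1)]
  rw [hg 0 θ, hg 1 θ, hd0, hd1, hdd0, hdd1, hdf0, hdf1, hddf0, hddf1,
    hp0, hp1, hf 0 θ, hf 1 θ]
  have hne : (1:ℝ) - θ ≠ 0 := sub_ne_zero.mpr (Ne.symm hθ1)
  field_simp
  ring
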